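/- Let (Ω, μ) be a probability space with measurable maps A, Y : Ω → Bool and a measurable h : Ω → ℝ with 0 ≤ h ω ≤ 1 for all ω. Assume each of the four events {A = a} ∩ {Y = b} (a, b ∈ Bool) has positive μ-measure, and assume the base rates differ: μ[{Y = true} | {A = false}] ≠ μ[{Y = true} | {A = true}] (conditional probabilities). Then the following are equivalent: (1) h is calibrated on both groups and satisfies equalized odds; (2) h is a perfect predictor, i.e. h = (the real-valued indicator of {Y = true}) μ-almost everywhere. -/

import Mathlib

set_option maxHeartbeats 1000000
open MeasureTheory ProbabilityTheory

section Aux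
variable {Ω : Type*} [MeasurableSpace Ω]

lemma aux_int_bdd {ν : Measure Ω} [IsFiniteMeasure ν] {f : Ω → ℝ} (hf : Measurable f)
    {C : ℝ} (hC : ∀ ω, ‖f ω‖ ≤ C) : Integrable f ν :=
  ⟨hf.aestronglyMeasurable, HasFiniteIntegral.of_bounded (Filter.Eventually.of_forall hC)⟩

lemma aux_cond_int (μ : Measure Ω) (S : Set Ω) (f : Ω → ℝ) :
    ∫ ω, f ω ∂(μ[|S]) = (μ S).toReal⁻¹ * ∫ ω in S, f ω ∂μ := by
  rw [ProbabilityTheory.cond, integral_smul_measure, ENNReal.toReal_inv, smul_eq_mul]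

lemma aux_ind_int (μ : Measure Ω) {t : Set Ω} (ht : MeasurableSet t) (s : Set Ω) (f : Ω → ℝ) :
    ∫ x in s, Set.indicator t f x ∂μ = ∫ x in t ∩ s, f x ∂μ := by
  rw [integral_indicator ht, Measure.restrict_restrict ht]

lemma aux_ind_one (μ : Measure Ω) {t : Set Ω} (ht : MeasurableSet t) (s : Set Ω) :
    ∫ x in s, Set.indicator t (fun _ => (1:ℝ)) x ∂μ = (μ (t ∩ s)).toReal := by
  rw [integral_indicator ht, setIntegral_const, measureReal_restrict_apply ht, measureReal_def, smul_eq_mul, mul_one]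

lemma aux_algebra {Pf Pt Ff Ft If' It' Jf Jt : ℝ}
    (hPf : 0 < Pf) (hPt : 0 < Pt) (hFf : 0 < Ff) (hFt : 0 < Ft)
    (hJf : 0 ≤ Jf) (hJt : 0 ≤ Jt)
    (e1 : If' + Jf = Pf) (e2 : It' + Jt = Pt)
    (eo1 : Ff⁻¹ * Jf = Ft⁻¹ * Jt)
    (eo2 : Pf⁻¹ * (Pf - If') = Pt⁻¹ * (Pt - It'))
    (hbase : (Pf + Ff)⁻¹ * Pf ≠ (Pt + Ft)⁻¹ * Pt) :
    Jf = 0 ∧ Jt = 0 := by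
  have a : Jf * Ft = Jt * Ff := by
    rw [inv_mul_eq_div, inv_mul_eq_div, div_eq_div_iff hFf.ne' hFt.ne'] at eo1; exact eo1
  have b : Jf * Pt = Jt * Pf := by
    have e1' : Pf - If' = Jf := by linarith
    have e2' : Pt - It' = Jt := by linarith
    rw [e1', e2', inv_mul_eq_div, inv_mul_eq_div, div_eq_div_iff hPf.ne' hPt.ne'] at eo2
    exact eo2
  have hJf0 : Jf = 0 := by
    by_contra hne
    have hJfp : 0 < Jf := lt_of_le_of_ne hJf (Ne.symm hne)
    have hJtp : 0 < Jt := by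
      rcases lt_or_eq_of_le hJt with h' | h'
      · exact h'
      · exfalso; rw [← h'] at b; simp at b; nlinarith
    have key : Ft * Pf = Ff * Pt := by
      have h0 : Jf * Jt ≠ 0 := ne_of_gt (mul_pos hJfp hJtp)
      have : (Jf * Jt) * (Ft * Pf) = (Jf * Jt) * (Ff * Pt) := by
        linear_combination (Jt * Pf) * a - (Jt * Ff) * b
      exact mul_left_cancel₀ h0 this
    apply hbase
    rw [inv_mul_eq_div, inv_mul_eq_div, div_eq_div_iff (by positivity) (by positivity)]
    linear_combination key
  refine ⟨hJf0, ?_⟩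
  rw [hJf0, zero_mul] at a
  rcases mul_eq_zero.mp a.symm with h' | h'
  · exact h'
  · exact absurd h' (ne_of_gt hFf)
end Aux

theorem impossibility_calibration_eo (Ω : Type*) [MeasurableSpace Ω]
    (μ : Measure Ω) [IsProbabilityMeasure μ]
    (A Y : Ω → Bool) (hA : Measurable A) (hY : Measurable Y)
    (h : Ω → ℝ) (hh : Measurable h) (hbd : ∀ ω, 0 ≤ h ω ∧ h ω ≤ 1)
    (hpos : ∀ a b : Bool, 0 < μ ({ω | A ω = a} ∩ {ω | Y ω = b}))
    (hbase : μ[|{ω | A ω = false}] {ω | Y ω = true} ≠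
      μ[|{ω | A ω = true}] {ω | Y ω = true}) :
    ((∀ a : Bool,
        (μ[|{ω | A ω = a}])[Set.indicator {ω | Y ω = true} (fun _ => (1 : ℝ)) |
            MeasurableSpace.comap h (borel ℝ)]
          =ᵐ[μ[|{ω | A ω = a}]] h) ∧
      (∫ ω, h ω ∂(μ[|{ω | Y ω = false} ∩ {ω | A ω = false}]) =
          ∫ ω, h ω ∂(μ[|{ω | Y ω = false} ∩ {ω | A ω = true}])) ∧
      (∫ ω, (1 - h ω) ∂(μ[|{ω | Y ω = true} ∩ {ω | A ω = false}]) =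
          ∫ ω, (1 - h ω) ∂(μ[|{ω | Y ω = true} ∩ {ω | A ω = true}])))
      ↔ h =ᵐ[μ] Set.indicator {ω | Y ω = true} (fun _ => (1 : ℝ)) := by
  classical
  set g : Ω → ℝ := Set.indicator {ω | Y ω = true} (fun _ => (1:ℝ)) with hgdef
  have mAs : ∀ a : Bool, MeasurableSet {ω | A ω = a} := fun a => hA (measurableSet_singleton a)
  have mYs : ∀ b : Bool, MeasurableSet {ω | Y ω = b} := fun b => hY (measurableSet_singleton b)
  have hgm : Measurable g := measurable_const.indicator (mYs true)
  have hgval : ∀ ω, g ω = 0 ∨ g ω = 1 := by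
    intro ω; by_cases hω : Y ω = true
    · right; simp [hgdef, Set.indicator_of_mem, hω]
    · left; simp [hgdef, Set.indicator_of_notMem, hω]
  have hgbd : ∀ ω, ‖g ω‖ ≤ 1 := by
    intro ω; rcases hgval ω with h' | h' <;> simp [h']
  have hhbd : ∀ ω, ‖h ω‖ ≤ 1 := fun ω =>
    abs_le.mpr ⟨by linarith [(hbd ω).1], (hbd ω).2⟩
  have hm : MeasurableSpace.comap h (borel ℝ) ≤ ‹MeasurableSpace Ω› := by
    rw [← BorelSpace.measurable_eq (α := ℝ)]; exact hh.comap_le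
  have hsm : StronglyMeasurable[MeasurableSpace.comap h (borel ℝ)] h := by
    apply Measurable.stronglyMeasurable
    rw [← BorelSpace.measurable_eq (α := ℝ)]
    exact Measurable.of_comap_le le_rfl
  have hAne : ∀ a : Bool, μ {ω | A ω = a} ≠ 0 := fun a =>
    (lt_of_lt_of_le (hpos a true) (measure_mono Set.inter_subset_left)).ne'
  have hYAne : ∀ b a : Bool, μ ({ω | Y ω = b} ∩ {ω | A ω = a}) ≠ 0 := fun b a => by
    rw [Set.inter_comm]; exact (hpos a b).ne'
  have hsplitset : ∀ a : Bool, {ω | A ω = a} =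
      ({ω | A ω = a} ∩ {ω | Y ω = true}) ∪ ({ω | A ω = a} ∩ {ω | Y ω = false}) := by
    intro a; ext ω; cases hy : Y ω <;> simp [hy]
  have hdisj : ∀ a : Bool,
      Disjoint ({ω | A ω = a} ∩ {ω | Y ω = true}) ({ω | A ω = a} ∩ {ω | Y ω = false}) := by
    intro a
    refine Set.disjoint_left.mpr fun ω hω1 hω2 => ?_
    exact absurd (hω1.2.symm.trans hω2.2) (by decide)
  have ih : Integrable h μ := aux_int_bdd hh hhbd
  have ig : Integrable g μ := aux_int_bdd hgm hgbd
  have hhg_ind : (fun ω => h ω * g ω) = Set.indicator {ω | Y ω = true} h := by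
    funext ω; by_cases hω : ω ∈ {ω | Y ω = true} <;>
      simp [hgdef, Set.indicator_of_mem, Set.indicator_of_notMem, hω]
  have hhgbd : ∀ ω, ‖h ω * g ω‖ ≤ 1 := fun ω => by
    rw [norm_mul]
    exact mul_le_one₀ (hhbd ω) (norm_nonneg _) (hgbd ω)
  have hhhbd : ∀ ω, ‖h ω * h ω‖ ≤ 1 := fun ω => by
    rw [norm_mul]
    exact mul_le_one₀ (hhbd ω) (norm_nonneg _) (hhbd ω)
  have ihg : Integrable (fun ω => h ω * g ω) μ := aux_int_bdd (hh.mul hgm) hhgbd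
  have ihh : Integrable (fun ω => h ω * h ω) μ := aux_int_bdd (hh.mul hh) hhhbd
  have hctne : ∀ a : Bool, (μ {ω | A ω = a}).toReal ≠ 0 := fun a =>
    ENNReal.toReal_ne_zero.mpr ⟨hAne a, measure_ne_top μ _⟩
  have hPpos : ∀ a : Bool, 0 < (μ ({ω | A ω = a} ∩ {ω | Y ω = true})).toReal := fun a =>
    ENNReal.toReal_pos (hpos a true).ne' (measure_ne_top μ _)
  have hFpos : ∀ a : Bool, 0 < (μ ({ω | A ω = a} ∩ {ω | Y ω = false})).toReal := fun a =>
    ENNReal.toReal_pos (hpos a false).ne' (measure_ne_top μ _)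
  constructor
  · rintro ⟨calib, eo1, eo2⟩
    -- per-group consequences of calibration
    have C1 : ∀ a : Bool,
        (∫ ω in {ω | A ω = a} ∩ {ω | Y ω = true}, h ω ∂μ) +
          (∫ ω in {ω | A ω = a} ∩ {ω | Y ω = false}, h ω ∂μ) =
        (μ ({ω | A ω = a} ∩ {ω | Y ω = true})).toReal := by
      intro a
      haveI : IsProbabilityMeasure (μ[|{ω | A ω = a}]) := cond_isProbabilityMeasure (hAne a)
      have e : ∫ ω, g ω ∂(μ[|{ω | A ω = a}]) = ∫ ω, h ω ∂(μ[|{ω | A ω = a}]) :=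
        (integral_condExp hm).symm.trans (integral_congr_ae (calib a))
      rw [aux_cond_int μ _ g, aux_cond_int μ _ h] at e
      have e' := mul_left_cancel₀ (inv_ne_zero (hctne a)) e
      rw [hgdef, aux_ind_one μ (mYs true), Set.inter_comm] at e'
      rw [e']
      conv_rhs => rw [hsplitset a]
      rw [setIntegral_union (hdisj a) ((mAs a).inter (mYs false))
        ih.integrableOn ih.integrableOn]
    have C2 : ∀ a : Bool,
        (∫ ω in {ω | A ω = a} ∩ {ω | Y ω = true}, h ω ∂μ) =
          ∫ ω in {ω | A ω = a}, h ω * h ω ∂μ := by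
      intro a
      haveI : IsProbabilityMeasure (μ[|{ω | A ω = a}]) := cond_isProbabilityMeasure (hAne a)
      have igc : Integrable g (μ[|{ω | A ω = a}]) := aux_int_bdd hgm hgbd
      have ihgc : Integrable (h * g) (μ[|{ω | A ω = a}]) := aux_int_bdd (hh.mul hgm) hhgbd
      have e : ∫ ω, (h * g) ω ∂(μ[|{ω | A ω = a}]) =
          ∫ ω, (h * h) ω ∂(μ[|{ω | A ω = a}]) := by
        refine (integral_condExp hm).symm.trans ?_
        refine (integral_congr_ae (condExp_mul_of_stronglyMeasurable_left hsm ihgc igc)).trans ?_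
        exact integral_congr_ae ((Filter.EventuallyEq.refl _ h).mul (calib a))
      simp only [Pi.mul_apply] at e
      rw [aux_cond_int μ _ (fun ω => h ω * g ω), aux_cond_int μ _ (fun ω => h ω * h ω)] at e
      have e' := mul_left_cancel₀ (inv_ne_zero (hctne a)) e
      rw [hhg_ind, aux_ind_int μ (mYs true), Set.inter_comm] at e'
      exact e'
    -- rewrite the EO hypotheses
    rw [aux_cond_int μ _ h, aux_cond_int μ _ h,
      Set.inter_comm {ω | Y ω = false} {ω | A ω = false},
      Set.inter_comm {ω | Y ω = false} {ω | A ω = true}] at eo1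
    rw [aux_cond_int μ _ (fun ω => 1 - h ω), aux_cond_int μ _ (fun ω => 1 - h ω),
      Set.inter_comm {ω | Y ω = true} {ω | A ω = false},
      Set.inter_comm {ω | Y ω = true} {ω | A ω = true}] at eo2
    have hsub : ∀ S : Set Ω, ∫ ω in S, (1 - h ω) ∂μ = (μ S).toReal - ∫ ω in S, h ω ∂μ := by
      intro S
      rw [integral_sub (integrableOn_const (C := (1:ℝ)) (measure_ne_top μ S))
        ih.integrableOn, setIntegral_const, measureReal_def, smul_eq_mul, mul_one]
    rw [hsub, hsub] at eo2
    -- base rate hypothesis in real form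
    have hμA : ∀ a : Bool, μ {ω | A ω = a} =
        μ ({ω | A ω = a} ∩ {ω | Y ω = true}) + μ ({ω | A ω = a} ∩ {ω | Y ω = false}) := by
      intro a
      conv_lhs => rw [hsplitset a]
      exact measure_union (hdisj a) ((mAs a).inter (mYs false))
    have hb' : ((μ ({ω | A ω = false} ∩ {ω | Y ω = true})).toReal +
          (μ ({ω | A ω = false} ∩ {ω | Y ω = false})).toReal)⁻¹ *
          (μ ({ω | A ω = false} ∩ {ω | Y ω = true})).toReal ≠
        ((μ ({ω | A ω = true} ∩ {ω | Y ω = true})).toReal +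
          (μ ({ω | A ω = true} ∩ {ω | Y ω = false})).toReal)⁻¹ *
          (μ ({ω | A ω = true} ∩ {ω | Y ω = true})).toReal := by
      intro heq
      apply hbase
      rw [cond_apply (mAs false), cond_apply (mAs true)]
      have hfin : ∀ a : Bool, (μ {ω | A ω = a})⁻¹ * μ ({ω | A ω = a} ∩ {ω | Y ω = true}) ≠ ⊤ :=
        fun a => ENNReal.mul_ne_top (ENNReal.inv_ne_top.mpr (hAne a)) (measure_ne_top μ _)
      refine (ENNReal.toReal_eq_toReal_iff' (hfin false) (hfin true)).mp ?_
      rw [ENNReal.toReal_mul, ENNReal.toReal_mul, ENNReal.toReal_inv, ENNReal.toReal_inv,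
        hμA false, hμA true,
        ENNReal.toReal_add (measure_ne_top μ _) (measure_ne_top μ _),
        ENNReal.toReal_add (measure_ne_top μ _) (measure_ne_top μ _)]
      exact heq
    -- apply the algebra lemma
    have hJnonneg : ∀ a : Bool, 0 ≤ ∫ ω in {ω | A ω = a} ∩ {ω | Y ω = false}, h ω ∂μ :=
      fun a => setIntegral_nonneg ((mAs a).inter (mYs false)) (fun ω _ => (hbd ω).1)
    obtain ⟨hJf0, hJt0⟩ := aux_algebra (hPpos false) (hPpos true) (hFpos false) (hFpos true)
      (hJnonneg false) (hJnonneg true) (C1 false) (C1 true) eo1 eo2 hb'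
    -- now each group's squared error integrates to zero
    have hsqbd : ∀ ω, ‖(g ω - h ω)^2‖ ≤ 1 := by
      intro ω
      rw [Real.norm_eq_abs, abs_of_nonneg (sq_nonneg _)]
      rcases hgval ω with h' | h' <;> nlinarith [(hbd ω).1, (hbd ω).2]
    have isq : Integrable (fun ω => (g ω - h ω)^2) μ :=
      aux_int_bdd ((hgm.sub hh).pow_const 2) hsqbd
    have hJ : ∀ a : Bool, (∫ ω in {ω | A ω = a} ∩ {ω | Y ω = false}, h ω ∂μ) = 0 := by
      intro a; cases a
      · exact hJf0
      · exact hJt0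
    have hsqzero : ∀ a : Bool, ∫ ω in {ω | A ω = a}, (g ω - h ω)^2 ∂μ = 0 := by
      intro a
      have expand : ∀ ω, (g ω - h ω)^2 = g ω - 2*(h ω * g ω) + h ω * h ω := by
        intro ω
        rcases hgval ω with h' | h' <;> rw [h'] <;> ring
      have step1 : ∫ ω in {ω | A ω = a}, (g ω - h ω)^2 ∂μ =
          ∫ ω in {ω | A ω = a}, (g ω - 2*(h ω * g ω) + h ω * h ω) ∂μ :=
        integral_congr_ae (Filter.Eventually.of_forall fun ω => expand ω)
      have step2 : ∫ ω in {ω | A ω = a}, (g ω - 2*(h ω * g ω) + h ω * h ω) ∂μ =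
          (∫ ω in {ω | A ω = a}, g ω ∂μ) - 2*(∫ ω in {ω | A ω = a}, h ω * g ω ∂μ) +
            ∫ ω in {ω | A ω = a}, h ω * h ω ∂μ := by
        have i2 : Integrable (fun ω => 2*(h ω * g ω)) (μ.restrict {ω | A ω = a}) :=
          (ihg.integrableOn).const_mul 2
        have i1 : Integrable (fun ω => g ω - 2*(h ω * g ω)) (μ.restrict {ω | A ω = a}) :=
          (ig.integrableOn).sub i2
        rw [integral_add i1 ihh.integrableOn, integral_sub ig.integrableOn i2,
          integral_const_mul]
      have egg : ∫ ω in {ω | A ω = a}, g ω ∂μ =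
          (μ ({ω | A ω = a} ∩ {ω | Y ω = true})).toReal := by
        rw [hgdef, aux_ind_one μ (mYs true), Set.inter_comm]
      have ehg : ∫ ω in {ω | A ω = a}, h ω * g ω ∂μ =
          ∫ ω in {ω | A ω = a} ∩ {ω | Y ω = true}, h ω ∂μ := by
        rw [hhg_ind, aux_ind_int μ (mYs true), Set.inter_comm]
      rw [step1, step2, egg, ehg, ← C2 a]
      linarith [C1 a, hJ a]
    have hae0 : ∀ a : Bool, (fun ω => (g ω - h ω)^2) =ᵐ[μ.restrict {ω | A ω = a}]
        (0 : Ω → ℝ) := fun a =>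
      (integral_eq_zero_iff_of_nonneg (fun ω => sq_nonneg _) isq.integrableOn).mp (hsqzero a)
    have hall : (fun ω => (g ω - h ω)^2) =ᵐ[μ] (0 : Ω → ℝ) := by
      have hcompl : {ω | A ω = false}ᶜ = {ω | A ω = true} := by
        ext ω; cases hA' : A ω <;> simp [hA']
      refine ae_of_ae_restrict_of_ae_restrict_compl {ω | A ω = false} (hae0 false) ?_
      rw [hcompl]; exact hae0 true
    filter_upwards [hall] with ω hω
    have h0 : (g ω - h ω)^2 = 0 := by simpa using hω
    have h1 : g ω - h ω = 0 := by
      nlinarith [sq_nonneg (g ω - h ω), h0, sq_abs (g ω - h ω), abs_nonneg (g ω - h ω)]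
    linarith
  · intro hpred
    refine ⟨?_, ?_, ?_⟩
    · intro a
      haveI : IsProbabilityMeasure (μ[|{ω | A ω = a}]) := cond_isProbabilityMeasure (hAne a)
      have hae : g =ᵐ[μ[|{ω | A ω = a}]] h :=
        (cond_absolutelyContinuous (s := {ω | A ω = a})).ae_eq hpred.symm
      have hce : ((μ[|{ω | A ω = a}])[h | MeasurableSpace.comap h (borel ℝ)]) = h :=
        condExp_of_stronglyMeasurable hm hsm (aux_int_bdd hh hhbd)
      exact (condExp_congr_ae hae).trans (by rw [hce])
    · have hz : ∀ a : Bool, ∫ ω, h ω ∂(μ[|{ω | Y ω = false} ∩ {ω | A ω = a}]) = 0 := by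
        intro a
        have hae : h =ᵐ[μ[|{ω | Y ω = false} ∩ {ω | A ω = a}]] g :=
          (cond_absolutelyContinuous (s := {ω | Y ω = false} ∩ {ω | A ω = a})).ae_eq hpred
        rw [integral_congr_ae hae, aux_cond_int μ _ g, hgdef, aux_ind_one μ (mYs true)]
        have hempty : {ω | Y ω = true} ∩ ({ω | Y ω = false} ∩ {ω | A ω = a}) = ∅ := by
          ext ω
          simp only [Set.mem_inter_iff, Set.mem_setOf_eq, Set.mem_empty_iff_false, iff_false]
          rintro ⟨h1, h2, -⟩
          exact absurd (h1.symm.trans h2) (by decide)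
        rw [hempty, measure_empty, ENNReal.toReal_zero, mul_zero]
      rw [hz false, hz true]
    · have hz : ∀ a : Bool, ∫ ω, (1 - h ω) ∂(μ[|{ω | Y ω = true} ∩ {ω | A ω = a}]) = 0 := by
        intro a
        have hae : (fun ω => 1 - h ω) =ᵐ[μ[|{ω | Y ω = true} ∩ {ω | A ω = a}]]
            (fun ω => 1 - g ω) := by
          have := (cond_absolutelyContinuous
            (s := {ω | Y ω = true} ∩ {ω | A ω = a})).ae_eq hpred
          filter_upwards [this] with ω hω
          rw [hω]
        rw [integral_congr_ae hae, aux_cond_int μ _ (fun ω => 1 - g ω)]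
        have hsub : ∫ ω in {ω | Y ω = true} ∩ {ω | A ω = a}, (1 - g ω) ∂μ =
            (μ ({ω | Y ω = true} ∩ {ω | A ω = a})).toReal -
              ∫ ω in {ω | Y ω = true} ∩ {ω | A ω = a}, g ω ∂μ := by
          rw [integral_sub (integrableOn_const (C := (1:ℝ)) (measure_ne_top μ _))
            ig.integrableOn, setIntegral_const, measureReal_def, smul_eq_mul, mul_one]
        rw [hsub, hgdef, aux_ind_one μ (mYs true),
          Set.inter_eq_self_of_subset_right Set.inter_subset_left, sub_self, mul_zero]
      rw [hz false, hz true]
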